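/- The Möbius transformation of J sends i to −i, i.e. J·i = −i; and for every z ∈ ℂ with z ≠ 3i/4 one has |J·z + 3i/4| · |z − 3i/4| = 1/16. Consequently, if |z − 3i/4| > 1/4 then |J·z + 3i/4| < 1/4 (J maps the exterior of the disc of radius 1/4 centred at 3i/4 into the interior of the disc of radius 1/4 centred at −3i/4), and if |z − 3i/4| = 1/4 then |J·z + 3i/4| = 1/4. -/

import Mathlib

open Matrix Complex

lemma key (z : ℂ) (hz : z ≠ 3*I/4) :
    (3 * z + (-2*I)) / (4*I * z + 3) + 3*I/4 = 1/(16*(z - 3*I/4)) := by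
  have h1 : z - 3*I/4 ≠ 0 := sub_ne_zero.mpr hz
  have h2 : (4*I) * z + 3 = (4*I) * (z - 3*I/4) := by
    have h : I * I = -1 := I_mul_I
    linear_combination 3 * h
  have h3 : (4*I) * z + 3 ≠ 0 := by
    rw [h2]; exact mul_ne_zero (by simp [I_ne_zero]) h1
  have hI : I * I = -1 := I_mul_I
  rw [div_add' _ _ _ h3, div_eq_div_iff h3 (mul_ne_zero (by norm_num) h1)]
  linear_combination (48 * z * (z - 3*I/4) - 3) * hI

/-- The Möbius transformation of J sends i to −i, i.e. J·i = −i; and for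
every z ∈ ℂ with z ≠ 3i/4 one has |J·z + 3i/4| · |z − 3i/4| = 1/16. Consequently, if
|z − 3i/4| > 1/4 then |J·z + 3i/4| < 1/4, and if |z − 3i/4| = 1/4 then |J·z + 3i/4| = 1/4. -/
theorem stmt1 :
    let J : Matrix (Fin 2) (Fin 2) ℂ := !![3, -2*I; 4*I, 3]
    let moeb : ℂ → ℂ := fun z => (J 0 0 * z + J 0 1) / (J 1 0 * z + J 1 1)
    moeb I = -I ∧
    (∀ z : ℂ, z ≠ 3*I/4 →
      ‖moeb z + 3*I/4‖ * ‖z - 3*I/4‖ = 1/16) ∧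
    (∀ z : ℂ, ‖z - 3*I/4‖ > 1/4 → ‖moeb z + 3*I/4‖ < 1/4) ∧
    (∀ z : ℂ, ‖z - 3*I/4‖ = 1/4 → ‖moeb z + 3*I/4‖ = 1/4) := by
  intro J moeb
  have hmoeb : ∀ z : ℂ, moeb z = (3 * z + (-2*I)) / (4*I * z + 3) := by
    intro z; simp [moeb, J]
  have hprod : ∀ z : ℂ, z ≠ 3*I/4 →
      ‖moeb z + 3*I/4‖ * ‖z - 3*I/4‖ = 1/16 := by
    intro z hz
    have h1 : z - 3*I/4 ≠ 0 := sub_ne_zero.mpr hz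
    have h2 : ‖z - 3*I/4‖ ≠ 0 := norm_ne_zero_iff.mpr h1
    rw [hmoeb, key z hz, norm_div, norm_mul, norm_one]
    simp only [Complex.norm_ofNat]
    have h4 : z*4 - 3*I ≠ 0 := by intro h; apply h1; linear_combination h/4
    have h5 : ‖z*4 - 3*I‖ ≠ 0 := norm_ne_zero_iff.mpr h4
    field_simp
    ring_nf
    exact mul_inv_cancel₀ (by rw [show z + I*(-3/4) = z - 3*I/4 by ring]; exact h2)
  refine ⟨?_, hprod, ?_, ?_⟩
  · rw [hmoeb]
    have hden : (4*I*I + 3 : ℂ) = -1 := by linear_combination 4 * I_mul_I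
    rw [hden]
    rw [div_neg, div_one]
    ring
  · intro z hz
    have hz' : z ≠ 3*I/4 := by
      intro h
      have : z - 3*I/4 = 0 := sub_eq_zero.mpr h
      rw [this] at hz; norm_num at hz
    have h := hprod z hz'
    nlinarith [norm_nonneg (moeb z + 3*I/4)]
  · intro z hz
    have hz' : z ≠ 3*I/4 := by
      intro h
      have : z - 3*I/4 = 0 := sub_eq_zero.mpr h
      rw [this] at hz; norm_num at hz
    have h := hprod z hz'
    rw [hz] at h
    linarith
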